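/- For 1 ≤ j < (n+1)/2, the polynomial Â'_{n,j}(t) satisfies the recurrence Â'_{n,j}(t) = (1+t) Σ_{k=1}^{j-1} Â'_{n-1,k}(t) + 2t Σ_{k=j}^{⌊n/2⌋} Â_{n-1,k}(t). -/

import Mathlib

open scoped Classical

/-- The number of descents of a permutation of `Fin n` (positions are 0-based:
`i` is a descent if `w i > w (i+1)`). -/
def des {n : ℕ} (w : Equiv.Perm (Fin n)) : ℕ :=
  (Finset.univ.filter fun i : Fin n => ∃ h : (i : ℕ) + 1 < n, w ⟨(i : ℕ) + 1, h⟩ < w i).card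

/-- `A n i j` = number of permutations `w` of `{1,…,n}` with `w(1) = j` (1-based)
and exactly `i` descents. -/
def A (n i j : ℕ) : ℕ :=
  (Finset.univ.filter fun w : Equiv.Perm (Fin n) =>
    (∀ x : Fin n, (x : ℕ) = 0 → (w x : ℕ) + 1 = j) ∧ des w = i).card

/-- The Eulerian number: permutations of `{1,…,n}` with exactly `i` descents. -/
def Eul (n i : ℕ) : ℕ :=
  (Finset.univ.filter fun w : Equiv.Perm (Fin n) => des w = i).card

open Polynomial

/-- Restricted Eulerian polynomial `A_{n,j}(t) = Σ_{w(1)=j} t^{d(w)}`. -/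
noncomputable def Apoly (n j : ℕ) : Polynomial ℤ :=
  ∑ w ∈ (Finset.univ.filter fun w : Equiv.Perm (Fin n) =>
      ∀ x : Fin n, (x : ℕ) = 0 → (w x : ℕ) + 1 = j), X ^ des w

/-- Symmetric restricted Eulerian polynomial
`Â_{n,j}(t) = Σ_{w(1) ∈ {j, n+1-j}} t^{d(w)}`. -/
noncomputable def AhatPoly (n j : ℕ) : Polynomial ℤ :=
  ∑ w ∈ (Finset.univ.filter fun w : Equiv.Perm (Fin n) =>
      ∀ x : Fin n, (x : ℕ) = 0 → ((w x : ℕ) + 1 = j ∨ (w x : ℕ) + 1 = n + 1 - j)),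
    X ^ des w

/-- `Â'_{n,j}(t) = t·A_{n,j}(t) + A_{n,n+1-j}(t)`. -/
noncomputable def AhatPoly' (n j : ℕ) : Polynomial ℤ :=
  X * Apoly n j + Apoly n (n + 1 - j)

section Aux

lemma forall_zero_iff {m : ℕ} (hm : 0 < m) (P : Fin m → Prop) :
    (∀ x : Fin m, (x : ℕ) = 0 → P x) ↔ P ⟨0, hm⟩ := by
  constructor
  · exact fun h => h ⟨0, hm⟩ rfl
  · intro h x hx
    have : x = ⟨0, hm⟩ := Fin.ext hx
    rwa [this]

noncomputable def extPerm {m : ℕ} (p : Fin (m + 1)) (e : Equiv.Perm (Fin m)) :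
    Equiv.Perm (Fin (m + 1)) :=
  (finSuccEquiv' (0 : Fin (m + 1))).trans ((e.optionCongr).trans (finSuccEquiv' p).symm)

lemma extPerm_zero {m : ℕ} (p : Fin (m + 1)) (e : Equiv.Perm (Fin m)) :
    extPerm p e 0 = p := by
  simp [extPerm, finSuccEquiv'_at, finSuccEquiv'_symm_none]

lemma extPerm_succ {m : ℕ} (p : Fin (m + 1)) (e : Equiv.Perm (Fin m)) (i : Fin m) :
    extPerm p e i.succ = p.succAbove (e i) := by
  show (finSuccEquiv' p).symm ((e.optionCongr) (finSuccEquiv' 0 i.succ)) = _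
  rw [← Fin.zero_succAbove, finSuccEquiv'_succAbove]
  simp [finSuccEquiv'_symm_some]

end Aux


lemma des_extPerm {m : ℕ} (hm : 0 < m) (p : Fin (m + 1)) (e : Equiv.Perm (Fin m)) :
    des (extPerm p e) = (if ((e ⟨0, hm⟩ : ℕ) < (p : ℕ)) then 1 else 0) + des e := by
  unfold des
  rw [Fin.card_filter_univ_succ']
  have key : ∀ i : Fin m,
      (∃ h : ((Fin.succ i : Fin (m + 1)) : ℕ) + 1 < m + 1,
        extPerm p e ⟨((Fin.succ i : Fin (m + 1)) : ℕ) + 1, h⟩ < extPerm p e (Fin.succ i))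
      ↔ (∃ h : (i : ℕ) + 1 < m, e ⟨(i : ℕ) + 1, h⟩ < e i) := by
    intro i
    constructor
    · rintro ⟨h, hlt⟩
      have h' : (i : ℕ) + 1 < m := by simpa using h
      refine ⟨h', ?_⟩
      have e1 : (⟨((Fin.succ i : Fin (m + 1)) : ℕ) + 1, h⟩ : Fin (m + 1))
          = Fin.succ ⟨(i : ℕ) + 1, h'⟩ := by
        apply Fin.ext; simp
      rw [e1, extPerm_succ, extPerm_succ] at hlt
      exact (Fin.succAbove_lt_succAbove_iff).mp hlt
    · rintro ⟨h, hlt⟩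
      have h2 : ((Fin.succ i : Fin (m + 1)) : ℕ) + 1 < m + 1 := by simp; omega
      refine ⟨h2, ?_⟩
      have e1 : (⟨((Fin.succ i : Fin (m + 1)) : ℕ) + 1, h2⟩ : Fin (m + 1))
          = Fin.succ ⟨(i : ℕ) + 1, h⟩ := by
        apply Fin.ext; simp
      rw [e1, extPerm_succ, extPerm_succ]
      exact (Fin.succAbove_lt_succAbove_iff).mpr hlt
  congr 1
  · have hz : (∃ h : ((0 : Fin (m + 1)) : ℕ) + 1 < m + 1,
        extPerm p e ⟨((0 : Fin (m + 1)) : ℕ) + 1, h⟩ < extPerm p e 0)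
      ↔ ((e ⟨0, hm⟩ : ℕ) < (p : ℕ)) := by
      constructor
      · rintro ⟨h, hlt⟩
        have e1 : (⟨((0 : Fin (m + 1)) : ℕ) + 1, h⟩ : Fin (m + 1))
            = Fin.succ ⟨0, hm⟩ := by apply Fin.ext; simp
        rw [e1, extPerm_succ, extPerm_zero] at hlt
        rw [Fin.succAbove_lt_iff_castSucc_lt] at hlt
        simpa [Fin.lt_def] using hlt
      · intro hlt
        have h : ((0 : Fin (m + 1)) : ℕ) + 1 < m + 1 := by simp; omega
        refine ⟨h, ?_⟩
        have e1 : (⟨((0 : Fin (m + 1)) : ℕ) + 1, h⟩ : Fin (m + 1))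
            = Fin.succ ⟨0, hm⟩ := by apply Fin.ext; simp
        rw [e1, extPerm_succ, extPerm_zero, Fin.succAbove_lt_iff_castSucc_lt]
        simpa [Fin.lt_def] using hlt
    rw [if_congr hz rfl rfl]
  · apply congrArg Finset.card
    apply Finset.filter_congr
    intro i _
    exact key i

noncomputable def resPerm {m : ℕ} (p : Fin (m + 1)) (w : Equiv.Perm (Fin (m + 1))) :
    Equiv.Perm (Fin m) :=
  Equiv.removeNone ((finSuccEquiv' (0 : Fin (m + 1))).symm.trans (w.trans (finSuccEquiv' p)))

lemma extPerm_resPerm {m : ℕ} (p : Fin (m + 1)) (w : Equiv.Perm (Fin (m + 1)))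
    (hw : w 0 = p) : extPerm p (resPerm p w) = w := by
  set u := (finSuccEquiv' (0 : Fin (m + 1))).symm.trans (w.trans (finSuccEquiv' p)) with hu
  apply Equiv.ext
  intro x
  refine Fin.cases ?_ ?_ x
  · rw [extPerm_zero, hw]
  · intro i
    rw [extPerm_succ]
    have hne : w i.succ ≠ p := by
      rw [← hw]; intro hcon; exact (Fin.succ_ne_zero i) (w.injective hcon)
    have husome : u (some i) = finSuccEquiv' p (w i.succ) := by
      simp [hu, Fin.zero_succAbove, Equiv.trans_apply, finSuccEquiv'_symm_some]
    have hsome : ∃ y, u (some i) = some y := by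
      rcases h2 : finSuccEquiv' p (w i.succ) with _ | y
      · exfalso
        apply hne
        have := congrArg (finSuccEquiv' p).symm h2
        simpa [finSuccEquiv'_symm_none] using this
      · exact ⟨y, by rw [husome, h2]⟩
    have h3 : some (resPerm p w i) = finSuccEquiv' p (w i.succ) := by
      rw [show resPerm p w = Equiv.removeNone u from rfl, Equiv.removeNone_some u hsome, husome]
    have h4 := congrArg (finSuccEquiv' p).symm h3
    rw [finSuccEquiv'_symm_some, Equiv.symm_apply_apply] at h4
    exact h4

lemma extPerm_injective {m : ℕ} (p : Fin (m + 1)) : Function.Injective (extPerm (m := m) p) := by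
  intro e e' h
  apply Equiv.ext
  intro i
  have h2 : extPerm p e i.succ = extPerm p e' i.succ := by rw [h]
  rw [extPerm_succ, extPerm_succ] at h2
  exact (Fin.strictMono_succAbove p).injective h2

lemma sum_des_fix {m : ℕ} (p : Fin (m + 1)) :
    ∑ w ∈ Finset.univ.filter (fun w : Equiv.Perm (Fin (m + 1)) => w 0 = p),
        (X : Polynomial ℤ) ^ des w
      = ∑ e : Equiv.Perm (Fin m), (X : Polynomial ℤ) ^ des (extPerm p e) := by
  symm
  apply Finset.sum_nbij' (i := fun e => extPerm p e) (j := fun w => resPerm p w)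
  · intro e _
    simp [extPerm_zero]
  · intro w _
    exact Finset.mem_univ _
  · intro e _
    apply extPerm_injective p
    exact extPerm_resPerm p (extPerm p e) (extPerm_zero p e)
  · intro w hw
    exact extPerm_resPerm p w (Finset.mem_filter.mp hw).2
  · intro e _
    rfl

lemma apoly_eq {m : ℕ} (hm : 0 < m) (k : ℕ) :
    Apoly m k = ∑ w ∈ Finset.univ.filter
        (fun w : Equiv.Perm (Fin m) => (w ⟨0, hm⟩ : ℕ) + 1 = k),
      (X : Polynomial ℤ) ^ des w := by
  unfold Apoly
  congr 1
  apply Finset.filter_congr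
  intro w _
  exact forall_zero_iff hm _

lemma sum_apoly_eq {m : ℕ} (hm : 0 < m) (s : Finset ℕ) :
    ∑ k ∈ s, Apoly m k
      = ∑ w ∈ Finset.univ.filter
          (fun w : Equiv.Perm (Fin m) => ((w ⟨0, hm⟩ : ℕ) + 1) ∈ s),
        (X : Polynomial ℤ) ^ des w := by
  rw [← Finset.sum_fiberwise_of_maps_to
    (g := fun w : Equiv.Perm (Fin m) => (w ⟨0, hm⟩ : ℕ) + 1)
    (t := s) (fun w hw => (Finset.mem_filter.mp hw).2)]
  apply Finset.sum_congr rfl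
  intro k hk
  rw [apoly_eq hm]
  congr 1
  ext w
  simp only [Finset.mem_filter, Finset.filter_filter, Finset.mem_univ, true_and]
  constructor
  · intro h2; exact ⟨by rw [h2]; exact hk, h2⟩
  · rintro ⟨_, h2⟩; exact h2

lemma apoly_rec (m j : ℕ) (hm : 1 ≤ m) (hj1 : 1 ≤ j) (hjm : j ≤ m + 1) :
    Apoly (m + 1) j
      = X * (∑ k ∈ Finset.Ioc 0 (j - 1), Apoly m k)
        + ∑ k ∈ Finset.Ioc (j - 1) m, Apoly m k := by
  have hm' : 0 < m := hm
  have hp : j - 1 < m + 1 := by omega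
  set p : Fin (m + 1) := ⟨j - 1, hp⟩ with hpdef
  have h1 : Apoly (m + 1) j
      = ∑ w ∈ Finset.univ.filter (fun w : Equiv.Perm (Fin (m + 1)) => w 0 = p),
          (X : Polynomial ℤ) ^ des w := by
    rw [apoly_eq (Nat.succ_pos m) j]
    congr 1
    apply Finset.filter_congr
    intro w _
    have h0 : (⟨0, Nat.succ_pos m⟩ : Fin (m + 1)) = 0 := rfl
    rw [h0]
    constructor
    · intro h
      apply Fin.ext
      simp only [hpdef]
      omega
    · intro h
      rw [h]
      simp only [hpdef]
      omega
  rw [h1, sum_des_fix]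
  have hsplit := Finset.sum_filter_add_sum_filter_not Finset.univ
    (fun e : Equiv.Perm (Fin m) => ((e ⟨0, hm'⟩ : ℕ) < j - 1))
    (fun e => (X : Polynomial ℤ) ^ des (extPerm p e))
  rw [← hsplit]
  congr 1
  · have : ∀ e ∈ Finset.univ.filter (fun e : Equiv.Perm (Fin m) => ((e ⟨0, hm'⟩ : ℕ) < j - 1)),
        (X : Polynomial ℤ) ^ des (extPerm p e) = X * X ^ des e := by
      intro e he
      rw [des_extPerm hm', if_pos (by simpa using (Finset.mem_filter.mp he).2)]
      ring
    rw [Finset.sum_congr rfl this, ← Finset.mul_sum]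
    congr 1
    rw [sum_apoly_eq hm' (Finset.Ioc 0 (j - 1))]
    congr 1
    apply Finset.filter_congr
    intro e _
    simp only [Finset.mem_Ioc]
    omega
  · have : ∀ e ∈ Finset.univ.filter (fun e : Equiv.Perm (Fin m) => ¬((e ⟨0, hm'⟩ : ℕ) < j - 1)),
        (X : Polynomial ℤ) ^ des (extPerm p e) = X ^ des e := by
      intro e he
      rw [des_extPerm hm', if_neg (show ¬ ((e ⟨0, hm'⟩ : ℕ) < j - 1) from (Finset.mem_filter.mp he).2)]
      ring
    rw [Finset.sum_congr rfl this]
    rw [sum_apoly_eq hm' (Finset.Ioc (j - 1) m)]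
    congr 1
    apply Finset.filter_congr
    intro e _
    simp only [Finset.mem_Ioc]
    have := (e ⟨0, hm'⟩).isLt
    omega

lemma ahat_eq {m : ℕ} (hm : 0 < m) (k : ℕ) (hk : 2 * k ≠ m + 1) :
    AhatPoly m k = Apoly m k + Apoly m (m + 1 - k) := by
  unfold AhatPoly
  rw [apoly_eq hm k, apoly_eq hm (m + 1 - k)]
  have hset : (Finset.univ.filter fun w : Equiv.Perm (Fin m) =>
        ∀ x : Fin m, (x : ℕ) = 0 → ((w x : ℕ) + 1 = k ∨ (w x : ℕ) + 1 = m + 1 - k))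
      = (Finset.univ.filter fun w : Equiv.Perm (Fin m) => (w ⟨0, hm⟩ : ℕ) + 1 = k)
        ∪ (Finset.univ.filter fun w : Equiv.Perm (Fin m) => (w ⟨0, hm⟩ : ℕ) + 1 = m + 1 - k) := by
    rw [← Finset.filter_or]
    apply Finset.filter_congr
    intro w _
    exact forall_zero_iff hm _
  rw [hset, Finset.sum_union]
  rw [Finset.disjoint_left]
  intro w hw1 hw2
  simp only [Finset.mem_filter, Finset.mem_univ, true_and] at hw1 hw2
  omega

lemma ahat_mid {m : ℕ} (hm : 0 < m) (k : ℕ) (hk : 2 * k = m + 1) :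
    AhatPoly m k = Apoly m k := by
  unfold AhatPoly
  rw [apoly_eq hm k]
  congr 1
  apply Finset.filter_congr
  intro w _
  rw [forall_zero_iff hm, show m + 1 - k = k by omega, or_self]

lemma sum_reflect {M : Type*} [AddCommMonoid M] (f : ℕ → M) (n a b : ℕ)
    (ha : a ≤ n) (hb : b ≤ n) :
    ∑ k ∈ Finset.Icc a b, f (n - k) = ∑ k ∈ Finset.Icc (n - b) (n - a), f k := by
  apply Finset.sum_nbij' (i := fun k => n - k) (j := fun k => n - k)
  · intro k hk; simp only [Finset.mem_Icc] at *; omega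
  · intro k hk; simp only [Finset.mem_Icc] at *; omega
  · intro k hk; simp only [Finset.mem_Icc] at *; omega
  · intro k hk; simp only [Finset.mem_Icc] at *; omega
  · intro k _; rfl

lemma sum_ahat (m j : ℕ) (hm : 1 ≤ m) (hj1 : 1 ≤ j) (hj : 2 * j < m + 2) :
    ∑ k ∈ Finset.Icc j ((m + 1) / 2), AhatPoly m k
      = ∑ k ∈ Finset.Ioc (j - 1) (m + 1 - j), Apoly m k := by
  have hm' : 0 < m := hm
  rcases Nat.even_or_odd (m + 1) with ⟨c, hc⟩ | ⟨c, hc⟩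
  · -- m + 1 = c + c (even)
    have hc1 : 1 ≤ c := by omega
    have h2 : (m + 1) / 2 = c := by omega
    have hjc : j ≤ c := by omega
    rw [h2]
    have hIcc : Finset.Icc j c = Finset.Ioc (j - 1) c := by
      rw [← Finset.Icc_add_one_left_eq_Ioc]; congr 1; omega
    have hsingle : Finset.Ioc (c - 1) c = {c} := by
      ext x
      simp only [Finset.mem_Ioc, Finset.mem_singleton]
      omega
    have lhs1 : ∑ k ∈ Finset.Icc j c, AhatPoly m k
        = ∑ k ∈ Finset.Ioc (j - 1) (c - 1), AhatPoly m k + AhatPoly m c := by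
      rw [hIcc, ← Finset.sum_Ioc_consecutive _ (show j - 1 ≤ c - 1 by omega)
        (show c - 1 ≤ c by omega), hsingle, Finset.sum_singleton]
    have lhs2 : ∑ k ∈ Finset.Ioc (j - 1) (c - 1), AhatPoly m k
        = ∑ k ∈ Finset.Ioc (j - 1) (c - 1), Apoly m k
          + ∑ k ∈ Finset.Ioc c (m + 1 - j), Apoly m k := by
      have : ∀ k ∈ Finset.Ioc (j - 1) (c - 1), AhatPoly m k
          = Apoly m k + Apoly m (m + 1 - k) := by
        intro k hk
        simp only [Finset.mem_Ioc] at hk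
        exact ahat_eq hm' k (by omega)
      rw [Finset.sum_congr rfl this, Finset.sum_add_distrib]
      congr 1
      have hIcc2 : Finset.Ioc (j - 1) (c - 1) = Finset.Icc j (c - 1) := by
        rw [← Finset.Icc_add_one_left_eq_Ioc]; congr 1; omega
      rw [hIcc2, sum_reflect (Apoly m) (m + 1) j (c - 1) (by omega) (by omega)]
      congr 1
      ext x
      simp only [Finset.mem_Icc, Finset.mem_Ioc]
      omega
    have rhs1 : ∑ k ∈ Finset.Ioc (j - 1) (m + 1 - j), Apoly m k
        = (∑ k ∈ Finset.Ioc (j - 1) (c - 1), Apoly m k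
            + ∑ k ∈ Finset.Ioc (c - 1) c, Apoly m k)
          + ∑ k ∈ Finset.Ioc c (m + 1 - j), Apoly m k := by
      rw [Finset.sum_Ioc_consecutive _ (show j - 1 ≤ c - 1 by omega) (show c - 1 ≤ c by omega),
        Finset.sum_Ioc_consecutive _ (show j - 1 ≤ c by omega) (show c ≤ m + 1 - j by omega)]
    rw [lhs1, lhs2, rhs1, hsingle, Finset.sum_singleton, ahat_mid hm' c (by omega)]
    ring
  · -- m + 1 = 2 * c + 1 (odd)
    have hc1 : 1 ≤ c := by omega
    have h2 : (m + 1) / 2 = c := by omega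
    have hjc : j ≤ c := by omega
    rw [h2]
    have lhs2 : ∑ k ∈ Finset.Icc j c, AhatPoly m k
        = ∑ k ∈ Finset.Ioc (j - 1) c, Apoly m k
          + ∑ k ∈ Finset.Ioc c (m + 1 - j), Apoly m k := by
      have : ∀ k ∈ Finset.Icc j c, AhatPoly m k = Apoly m k + Apoly m (m + 1 - k) := by
        intro k hk
        simp only [Finset.mem_Icc] at hk
        exact ahat_eq hm' k (by omega)
      rw [Finset.sum_congr rfl this, Finset.sum_add_distrib]
      congr 1
      · congr 1
        rw [← Finset.Icc_add_one_left_eq_Ioc]; congr 1; omega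
      · rw [sum_reflect (Apoly m) (m + 1) j c (by omega) (by omega)]
        congr 1
        ext x
        simp only [Finset.mem_Icc, Finset.mem_Ioc]
        omega
    rw [lhs2, Finset.sum_Ioc_consecutive _ (show j - 1 ≤ c by omega)
      (show c ≤ m + 1 - j by omega)]

theorem stmt9 (n j : ℕ) (hj1 : 1 ≤ j) (hj : 2 * j < n + 1) :
    AhatPoly' n j =
      (1 + X) * (∑ k ∈ Finset.Icc 1 (j - 1), AhatPoly' (n - 1) k) +
        2 * X * ∑ k ∈ Finset.Icc j (n / 2), AhatPoly (n - 1) k := by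
  have hn2 : 2 ≤ n := by omega
  obtain ⟨m, rfl⟩ : ∃ m, n = m + 1 := ⟨n - 1, by omega⟩
  have hm : 1 ≤ m := by omega
  simp only [Nat.add_sub_cancel]
  have hIoc0 : Finset.Icc 1 (j - 1) = Finset.Ioc 0 (j - 1) := by
    ext x; simp only [Finset.mem_Icc, Finset.mem_Ioc]; omega
  rw [hIoc0, sum_ahat m j hm hj1 (by omega)]
  simp only [AhatPoly']
  rw [apoly_rec m j hm hj1 (by omega)]
  rw [apoly_rec m (m + 1 + 1 - j) hm (by omega) (by omega)]
  rw [show m + 1 + 1 - j - 1 = m + 1 - j by omega]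
  rw [Finset.sum_add_distrib, ← Finset.mul_sum]
  rw [← Finset.sum_Ioc_consecutive (Apoly m)
    (show j - 1 ≤ m + 1 - j by omega) (show m + 1 - j ≤ m by omega)]
  rw [← Finset.sum_Ioc_consecutive (Apoly m)
    (show (0 : ℕ) ≤ j - 1 by omega) (show j - 1 ≤ m + 1 - j by omega)]
  have eT2 : ∑ k ∈ Finset.Ioc (m + 1 - j) m, Apoly m k
      = ∑ k ∈ Finset.Ioc 0 (j - 1), Apoly m (m + 1 - k) := by
    rw [show Finset.Ioc 0 (j - 1) = Finset.Icc 1 (j - 1) from hIoc0.symm,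
      sum_reflect (Apoly m) (m + 1) 1 (j - 1) (by omega) (by omega)]
    congr 1
    ext x
    simp only [Finset.mem_Icc, Finset.mem_Ioc]
    omega
  rw [eT2]
  ring
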